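/- Let B : ℝ^d × ℝ^d → ℝ^d be a symmetric bilinear map with x·B(x,x) = 0 for all x, let A be a symmetric positive semidefinite matrix, and fix ε ∈ (0,1), T > 0. Suppose u : [0,T] → ℝ^d is continuously differentiable and satisfies du/dt = B(u,u) + 2B(u,F(t)) + B(F(t),F(t)) − εAu − εAF(t) where F : [0,T] → ℝ^d is continuous with sup_{0≤t≤T}|F(t)| ≤ ε. Then there exists a constant C ≥ 1, depending only on B and A (not on ε, T, or u), such that for all t ∈ [0,T]: e^{−εCt}|u(0)| − √ε ≤ |u(t)| ≤ e^{εCt}(|u(0)| + √ε). -/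

import Mathlib

set_option maxHeartbeats 1000000

open Set Real

private lemma my_sqrt_add_le {a b : ℝ} (ha : 0 ≤ a) (hb : 0 ≤ b) :
    Real.sqrt (a + b) ≤ Real.sqrt a + Real.sqrt b := by
  have h : a + b ≤ (Real.sqrt a + Real.sqrt b) ^ 2 := by
    have h1 := Real.sq_sqrt ha
    have h2 := Real.sq_sqrt hb
    nlinarith [Real.sqrt_nonneg a, Real.sqrt_nonneg b,
      mul_nonneg (Real.sqrt_nonneg a) (Real.sqrt_nonneg b)]
  calc Real.sqrt (a + b) ≤ Real.sqrt ((Real.sqrt a + Real.sqrt b) ^ 2) := Real.sqrt_le_sqrt h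
    _ = _ := Real.sqrt_sq (by positivity)

theorem stmt3 (d : ℕ)
    (B : EuclideanSpace ℝ (Fin d) → EuclideanSpace ℝ (Fin d) → EuclideanSpace ℝ (Fin d))
    (hBadd : ∀ x y z, B (x + y) z = B x z + B y z)
    (hBsmul : ∀ (c : ℝ) (x y), B (c • x) y = c • B x y)
    (hBsymm : ∀ x y, B x y = B y x)
    (hBenergy : ∀ x, (inner ℝ x (B x x) : ℝ) = 0)
    (A : EuclideanSpace ℝ (Fin d) →L[ℝ] EuclideanSpace ℝ (Fin d))
    (hAsymm : ∀ x y, (inner ℝ (A x) y : ℝ) = (inner ℝ x (A y) : ℝ))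
    (hApos : ∀ x, 0 ≤ (inner ℝ (A x) x : ℝ)) :
    ∃ C : ℝ, 1 ≤ C ∧
      ∀ (ε T : ℝ) (u F : ℝ → EuclideanSpace ℝ (Fin d)),
        0 < ε → ε < 1 → 0 < T →
        ContinuousOn F (Set.Icc 0 T) →
        (∀ t ∈ Set.Icc 0 T, ‖F t‖ ≤ ε) →
        (∀ t ∈ Set.Icc 0 T, HasDerivAt u
          (B (u t) (u t) + (2:ℝ) • B (u t) (F t) + B (F t) (F t)
            - ε • A (u t) - ε • A (F t)) t) →
        ∀ t ∈ Set.Icc 0 T,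
          Real.exp (-(ε * C * t)) * ‖u 0‖ - Real.sqrt ε ≤ ‖u t‖ ∧
          ‖u t‖ ≤ Real.exp (ε * C * t) * (‖u 0‖ + Real.sqrt ε) := by
  -- bilinear bound
  obtain ⟨M, hM0, hMB⟩ : ∃ M : ℝ, 0 ≤ M ∧ ∀ x y, ‖B x y‖ ≤ M * ‖x‖ * ‖y‖ := by
    let L : EuclideanSpace ℝ (Fin d) →ₗ[ℝ] EuclideanSpace ℝ (Fin d) →ₗ[ℝ] EuclideanSpace ℝ (Fin d) :=
      LinearMap.mk₂ ℝ B hBadd hBsmul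
      (fun x y z => by rw [hBsymm x (y + z), hBadd, hBsymm y x, hBsymm z x])
      (fun c x y => by rw [hBsymm x (c • y), hBsmul, hBsymm y x])
    let L1 : EuclideanSpace ℝ (Fin d) →ₗ[ℝ] (EuclideanSpace ℝ (Fin d) →L[ℝ] EuclideanSpace ℝ (Fin d)) :=
      { toFun := fun x => LinearMap.toContinuousLinearMap (L x)
        map_add' := fun x y => by ext z; simp [L]
        map_smul' := fun c x => by ext z; simp [L] }
    let L2 := LinearMap.toContinuousLinearMap L1
    refine ⟨‖L2‖, L2.opNorm_nonneg, fun x y => ?_⟩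
    have h : B x y = L2 x y := rfl
    rw [h]
    exact L2.le_opNorm₂ x y
  set a := ‖A‖ with ha
  have ha0 : 0 ≤ a := norm_nonneg A
  set C := max 1 (5 * M + 3 * a) with hCdef
  have hC1 : (1:ℝ) ≤ C := le_max_left _ _
  have hC0 : (0:ℝ) < C := lt_of_lt_of_le one_pos hC1
  have hCM : 5 * M + 3 * a ≤ C := le_max_right _ _
  refine ⟨C, hC1, ?_⟩
  intro ε T u F hε hε1 hT hFc hFb hu
  set D : ℝ → EuclideanSpace ℝ (Fin d) := fun s =>
    B (u s) (u s) + (2:ℝ) • B (u s) (F s) + B (F s) (F s) - ε • A (u s) - ε • A (F s) with hD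
  set g : ℝ → ℝ := fun s => (inner ℝ (u s) (u s) : ℝ) with hgdef
  have hgval : ∀ s, g s = ‖u s‖ ^ 2 := fun s => real_inner_self_eq_norm_sq _
  have hgnn : ∀ s, 0 ≤ g s := fun s => real_inner_self_nonneg
  have hg' : ∀ s ∈ Icc (0:ℝ) T, HasDerivAt g (2 * (inner ℝ (u s) (D s) : ℝ)) s := by
    intro s hs
    have h := HasDerivAt.inner ℝ (hu s hs) (hu s hs)
    have e : 2 * inner ℝ (u s) (D s) = inner ℝ (u s) (D s) + inner ℝ (D s) (u s) := by
      rw [real_inner_comm (u s) (D s)]; ring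
    rw [e]; exact h
  have key : ∀ s ∈ Icc (0:ℝ) T, |2 * (inner ℝ (u s) (D s) : ℝ)| ≤ 2 * ε * C * g s + C * ε ^ 2 := by
    intro s hs
    have hf : ‖F s‖ ≤ ε := hFb s hs
    have hf0 : (0:ℝ) ≤ ‖F s‖ := norm_nonneg _
    have hr : (0:ℝ) ≤ ‖u s‖ := norm_nonneg _
    set x := u s
    set y := F s
    set R : EuclideanSpace ℝ (Fin d) := (2:ℝ) • B x y + B y y - ε • A x - ε • A y with hR
    have hDs : D s = B x x + R := by rw [hD, hR]; simp only [x, y]; abel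
    have hinner : (inner ℝ x (D s) : ℝ) = inner ℝ x R := by
      rw [hDs, inner_add_right, hBenergy, zero_add]
    have hnR : ‖R‖ ≤ 2 * (M * ‖x‖ * ‖y‖) + M * ‖y‖ * ‖y‖ + ε * (a * ‖x‖) + ε * (a * ‖y‖) := by
      have t1 : ‖R‖ ≤ ‖(2:ℝ) • B x y + B y y - ε • A x‖ + ‖ε • A y‖ := norm_sub_le _ _
      have t2 : ‖(2:ℝ) • B x y + B y y - ε • A x‖ ≤ ‖(2:ℝ) • B x y + B y y‖ + ‖ε • A x‖ :=
        norm_sub_le _ _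
      have t3 : ‖(2:ℝ) • B x y + B y y‖ ≤ ‖(2:ℝ) • B x y‖ + ‖B y y‖ := norm_add_le _ _
      have e1 : ‖(2:ℝ) • B x y‖ = 2 * ‖B x y‖ := by
        rw [norm_smul]; simp
      have e2 : ‖ε • A x‖ = ε * ‖A x‖ := by
        rw [norm_smul, Real.norm_eq_abs, abs_of_pos hε]
      have e3 : ‖ε • A y‖ = ε * ‖A y‖ := by
        rw [norm_smul, Real.norm_eq_abs, abs_of_pos hε]
      have b1 : ‖B x y‖ ≤ M * ‖x‖ * ‖y‖ := hMB x y
      have b2 : ‖B y y‖ ≤ M * ‖y‖ * ‖y‖ := hMB y y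
      have b3 : ‖A x‖ ≤ a * ‖x‖ := A.le_opNorm x
      have b4 : ‖A y‖ ≤ a * ‖y‖ := A.le_opNorm y
      have hεAx : ε * ‖A x‖ ≤ ε * (a * ‖x‖) := mul_le_mul_of_nonneg_left b3 hε.le
      have hεAy : ε * ‖A y‖ ≤ ε * (a * ‖y‖) := mul_le_mul_of_nonneg_left b4 hε.le
      linarith [t1, t2, t3, e1.le, e2.le, e3.le, b1, b2, hεAx, hεAy, e1.ge, e2.ge, e3.ge]
    have habs : |(inner ℝ x (D s) : ℝ)| ≤ ‖x‖ * ‖R‖ := by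
      rw [hinner]; exact abs_real_inner_le_norm _ _
    have hgs : g s = ‖x‖ ^ 2 := hgval s
    have hRnn : (0:ℝ) ≤ ‖R‖ := norm_nonneg _
    rw [abs_mul, abs_two, hgs]
    have habs2 := habs
    have step1 : ‖x‖ * ‖R‖ ≤
        ‖x‖ * (2 * (M * ‖x‖ * ε) + M * ε * ε + ε * (a * ‖x‖) + ε * (a * ε)) := by
      have h1 : 2 * (M * ‖x‖ * ‖y‖) ≤ 2 * (M * ‖x‖ * ε) := by
        have := mul_le_mul_of_nonneg_left hf (mul_nonneg hM0 hr)
        linarith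
      have h2 : M * ‖y‖ * ‖y‖ ≤ M * ε * ε := by
        nlinarith [mul_le_mul hf hf hf0 hε.le, hM0]
      have h3 : ε * (a * ‖y‖) ≤ ε * (a * ε) :=
        mul_le_mul_of_nonneg_left (mul_le_mul_of_nonneg_left hf ha0) hε.le
      have h4 : ‖R‖ ≤ 2 * (M * ‖x‖ * ε) + M * ε * ε + ε * (a * ‖x‖) + ε * (a * ε) := by
        linarith [hnR]
      exact mul_le_mul_of_nonneg_left h4 hr
    have step2 : 2 * (‖x‖ * (2 * (M * ‖x‖ * ε) + M * ε * ε + ε * (a * ‖x‖) + ε * (a * ε)))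
        ≤ 2 * ε * C * ‖x‖ ^ 2 + C * ε ^ 2 := by
      have h2r : 2 * ‖x‖ ≤ ‖x‖ ^ 2 + 1 := by nlinarith [sq_nonneg (‖x‖ - 1)]
      have hεsq : ε ^ 2 * ‖x‖ ^ 2 ≤ ε * ‖x‖ ^ 2 := by
        nlinarith [mul_nonneg (mul_nonneg hε.le (sub_nonneg.2 hε1.le)) (sq_nonneg ‖x‖)]
      have hMa : (0:ℝ) ≤ M + a := by linarith
      have c1 := mul_le_mul_of_nonneg_left h2r
        (mul_nonneg (sq_nonneg ε) hMa)
      have c2 := mul_le_mul_of_nonneg_left hεsq hMa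
      have c3 := mul_le_mul_of_nonneg_right hCM
        (mul_nonneg hε.le (sq_nonneg ‖x‖))
      have c4 : ε ^ 2 * (M + a) ≤ ε ^ 2 * C := by
        have : M + a ≤ C := by linarith
        exact mul_le_mul_of_nonneg_left this (sq_nonneg ε)
      have c5 : 0 ≤ ε * C * ‖x‖ ^ 2 :=
        mul_nonneg (mul_nonneg hε.le hC0.le) (sq_nonneg ‖x‖)
      nlinarith [c1, c2, c3, c4, c5]
    calc 2 * |(inner ℝ x (D s) : ℝ)|
        ≤ 2 * (‖x‖ * ‖R‖) := by
          have := abs_le.1 habs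
          linarith [habs]
      _ ≤ 2 * (‖x‖ * (2 * (M * ‖x‖ * ε) + M * ε * ε + ε * (a * ‖x‖) + ε * (a * ε))) := by
          linarith [step1]
      _ ≤ 2 * ε * C * ‖x‖ ^ 2 + C * ε ^ 2 := step2
  -- continuity of g on [0,T]
  have hgc : ContinuousOn g (Icc 0 T) := fun s hs => ((hg' s hs).continuousAt).continuousWithinAt
  have hK : 2 * ε * C ≠ 0 := by positivity
  intro t ht
  have ht0 := ht.1
  have htT := ht.2
  have hIccsub : Icc (0:ℝ) t ⊆ Icc 0 T := Icc_subset_Icc le_rfl htT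
  have hIcosub : Ico (0:ℝ) t ⊆ Icc 0 T := fun s hs => ⟨hs.1, le_trans hs.2.le htT⟩
  have hexp2 : Real.exp (ε * C * t) * Real.exp (ε * C * t) = Real.exp (2 * ε * C * t) := by
    rw [← Real.exp_add]; ring_nf
  have hexpge : (1:ℝ) ≤ Real.exp (2 * ε * C * t) := by
    apply Real.one_le_exp
    positivity
  -- upper bound via Gronwall
  have upper : g t ≤ Real.exp (2 * ε * C * t) * (g 0 + ε) := by
    have hGB := norm_le_gronwallBound_of_norm_deriv_right_le
      (f := g) (f' := fun s => 2 * (inner ℝ (u s) (D s) : ℝ))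
      (δ := g 0) (K := 2 * ε * C) (ε := C * ε ^ 2) (a := 0) (b := t)
      (hgc.mono hIccsub)
      (fun s hs => ((hg' s (hIcosub hs)).hasDerivWithinAt))
      (by rw [Real.norm_eq_abs, abs_of_nonneg (hgnn 0)])
      (fun s hs => by
        rw [Real.norm_eq_abs, Real.norm_eq_abs, abs_of_nonneg (hgnn s)]
        exact key s (hIcosub hs))
      t ⟨ht0, le_refl t⟩
    rw [Real.norm_eq_abs, abs_of_nonneg (hgnn t), sub_zero] at hGB
    rw [gronwallBound_of_K_ne_0 hK] at hGB
    have hdiv : C * ε ^ 2 / (2 * ε * C) = ε / 2 := by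
      field_simp
    rw [hdiv] at hGB
    nlinarith [hGB, hexpge, hε.le]
  -- lower bound via reversed Gronwall
  have lower : Real.exp (-(2 * ε * C * t)) * g 0 - ε ≤ g t := by
    set w : ℝ → ℝ := fun s => g (t - s) with hw
    have hwmem : ∀ s ∈ Icc (0:ℝ) t, t - s ∈ Icc (0:ℝ) T := by
      intro s hs
      exact ⟨by linarith [hs.2], by linarith [hs.1]⟩
    have hw' : ∀ s ∈ Ico (0:ℝ) t, HasDerivAt w (-(2 * (inner ℝ (u (t - s)) (D (t - s)) : ℝ))) s := by
      intro s hs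
      have hmem : t - s ∈ Icc (0:ℝ) T := hwmem s ⟨hs.1, hs.2.le⟩
      have h1 := hg' (t - s) hmem
      have h2 : HasDerivAt (fun s : ℝ => t - s) (-1) s := by
        simpa using (hasDerivAt_id s).const_sub t
      have h3 := h1.comp s h2
      rw [show -(2 * inner ℝ (u (t - s)) (D (t - s))) = 2 * inner ℝ (u (t - s)) (D (t - s)) * -1 by ring]
      exact h3
    have hwc : ContinuousOn w (Icc 0 t) := by
      apply hgc.comp ((continuous_const.sub continuous_id).continuousOn)
      intro s hs
      exact hwmem s hs
    have hGB := norm_le_gronwallBound_of_norm_deriv_right_le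
      (f := w) (f' := fun s => -(2 * (inner ℝ (u (t - s)) (D (t - s)) : ℝ)))
      (δ := w 0) (K := 2 * ε * C) (ε := C * ε ^ 2) (a := 0) (b := t)
      hwc
      (fun s hs => ((hw' s hs).hasDerivWithinAt))
      (by rw [Real.norm_eq_abs, abs_of_nonneg (hgnn _)])
      (fun s hs => by
        rw [Real.norm_eq_abs, Real.norm_eq_abs, abs_of_nonneg (hgnn _), abs_neg]
        exact key _ (hwmem s ⟨hs.1, hs.2.le⟩))
      t ⟨ht0, le_refl t⟩
    have hw0 : w 0 = g t := by simp [hw]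
    have hwt : w t = g 0 := by simp [hw]
    rw [Real.norm_eq_abs, hwt, abs_of_nonneg (hgnn 0), sub_zero, hw0,
      gronwallBound_of_K_ne_0 hK] at hGB
    have hdiv : C * ε ^ 2 / (2 * ε * C) = ε / 2 := by
      field_simp
    rw [hdiv] at hGB
    -- g 0 ≤ g t * e^{Kt} + (ε/2)(e^{Kt} - 1)
    have hexppos : 0 < Real.exp (2 * ε * C * t) := Real.exp_pos _
    have hinv : Real.exp (-(2 * ε * C * t)) = (Real.exp (2 * ε * C * t))⁻¹ := by
      rw [Real.exp_neg]
    rw [hinv]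
    have h5 := mul_le_mul_of_nonneg_left hGB (inv_pos.2 hexppos).le
    have hinvmul : (Real.exp (2 * ε * C * t))⁻¹ * Real.exp (2 * ε * C * t) = 1 :=
      inv_mul_cancel₀ (ne_of_gt hexppos)
    nlinarith [h5, hinvmul, hgnn t, hε.le, (inv_pos.2 hexppos).le]
  constructor
  · -- lower bound on ‖u t‖
    by_cases hcase : Real.exp (-(ε * C * t)) * ‖u 0‖ ≤ Real.sqrt ε
    · linarith [norm_nonneg (u t)]
    · push_neg at hcase
      set q := Real.exp (-(ε * C * t)) * ‖u 0‖ - Real.sqrt ε with hq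
      have hq0 : 0 < q := by simpa [hq] using sub_pos.2 hcase
      have hexpm : Real.exp (-(ε * C * t)) * Real.exp (-(ε * C * t))
          = Real.exp (-(2 * ε * C * t)) := by
        rw [← Real.exp_add]; ring_nf
      have hsq : Real.sqrt ε ^ 2 = ε := Real.sq_sqrt hε.le
      have hsqnn : 0 ≤ Real.sqrt ε := Real.sqrt_nonneg ε
      have hεle : ε ≤ Real.exp (-(ε * C * t)) * ‖u 0‖ * Real.sqrt ε := by
        have := mul_le_mul_of_nonneg_right hcase.le hsqnn
        nlinarith [this]
      have hq2 : q ^ 2 ≤ g t := by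
        have hg0 : g 0 = ‖u 0‖ ^ 2 := hgval 0
        nlinarith [lower, hexpm, hsq, Real.exp_pos (-(ε * C * t)), norm_nonneg (u 0)]
      calc q = Real.sqrt (q ^ 2) := (Real.sqrt_sq hq0.le).symm
        _ ≤ Real.sqrt (g t) := Real.sqrt_le_sqrt hq2
        _ = ‖u t‖ := by rw [hgval t, Real.sqrt_sq (norm_nonneg _)]
  · -- upper bound on ‖u t‖
    have h1 : ‖u t‖ = Real.sqrt (g t) := by rw [hgval t, Real.sqrt_sq (norm_nonneg _)]
    have hsq : Real.sqrt ε ^ 2 = ε := Real.sq_sqrt hε.le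
    have h2 : g t ≤ (Real.exp (ε * C * t) * (‖u 0‖ + Real.sqrt ε)) ^ 2 := by
      have hg0 : g 0 = ‖u 0‖ ^ 2 := hgval 0
      nlinarith [upper, hexp2, Real.exp_pos (ε * C * t), norm_nonneg (u 0),
        Real.sqrt_nonneg ε, mul_nonneg (norm_nonneg (u 0)) (Real.sqrt_nonneg ε),
        (Real.exp_pos (ε * C * t)).le]
    calc ‖u t‖ = Real.sqrt (g t) := h1
      _ ≤ Real.sqrt ((Real.exp (ε * C * t) * (‖u 0‖ + Real.sqrt ε)) ^ 2) :=
          Real.sqrt_le_sqrt h2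
      _ = Real.exp (ε * C * t) * (‖u 0‖ + Real.sqrt ε) := Real.sqrt_sq (by positivity)
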